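/- For all 0 ≤ t ≤ θ and every integrable F_θ-measurable random variable φ_θ, one has P(τ > t, S_t = 0) = 0 and, P-almost surely, E_P[φ_θ 1_{τ > θ} | G_t] = 1_{τ > t} · E_P[φ_θ S_θ | F_t] / S_t, where the right-hand side is taken to be 0 on the event {τ ≤ t}. (First formula of Proposition 4.1: the key lemma of progressive enlargement of filtration.) -/

import Mathlib

open MeasureTheory ProbabilityTheory Set
open scoped NNReal Classical
open scoped ENNReal

noncomputable section

/-- Running infimum `X*_t = inf_{s ≤ t} X_s` of the process `X` over the time interval
`[0, t]`. -/
def runInf {Ω : Type*} (X : ℝ≥0 → Ω → ℝ) (t : ℝ≥0) (ω : Ω) : ℝ :=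
  ⨅ s : Set.Icc (0 : ℝ≥0) t, X s.1 ω

/-- The σ-algebra `σ({τ ≤ s} : s ≤ t)` generated by the default observations up to time
`t`. -/
def defaultSigma {Ω : Type*} (τ : Ω → ℝ≥0) (t : ℝ≥0) : MeasurableSpace Ω :=
  MeasurableSpace.generateFrom {A | ∃ s ≤ t, A = {ω | τ ω ≤ s}}

/-- The Azéma supermartingale `S_t = P(τ > t | F_t)` of `τ`. -/
def azema {Ω : Type*} [m0 : MeasurableSpace Ω] (P : Measure Ω) (F : Filtration ℝ≥0 m0)
    (τ : Ω → ℝ≥0) (t : ℝ≥0) : Ω → ℝ :=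
  P[fun ω => if t < τ ω then (1 : ℝ) else 0|F t]

lemma measurable_runInf {Ω : Type*} [MeasurableSpace Ω] {X : ℝ≥0 → Ω → ℝ}
    (hmeas : ∀ s, Measurable (X s)) (hcont : ∀ ω, Continuous fun s => X s ω) (t : ℝ≥0) :
    Measurable (runInf X t) := by
  haveI : Nonempty (Set.Icc (0 : ℝ≥0) t) := ⟨⟨0, le_rfl, (zero_le : (0 : ℝ≥0) ≤ t)⟩⟩
  haveI : CompactSpace (Set.Icc (0 : ℝ≥0) t) := isCompact_iff_compactSpace.mp isCompact_Icc
  set u := TopologicalSpace.denseSeq (Set.Icc (0 : ℝ≥0) t) with hu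
  have key : runInf X t = fun ω => ⨅ n, X (u n).1 ω := by
    funext ω
    have hg : Continuous (fun s : Set.Icc (0 : ℝ≥0) t => X s.1 ω) :=
      (hcont ω).comp continuous_subtype_val
    have hbdd : BddBelow (Set.range fun s : Set.Icc (0 : ℝ≥0) t => X s.1 ω) :=
      (isCompact_range hg).bddBelow
    have hbdd2 : BddBelow (Set.range fun n => X (u n).1 ω) := by
      refine hbdd.mono ?_
      rintro x ⟨n, rfl⟩
      exact ⟨u n, rfl⟩
    refine le_antisymm (le_ciInf fun n => ciInf_le hbdd (u n)) (le_ciInf fun s => ?_)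
    have hC : IsClosed {x : Set.Icc (0 : ℝ≥0) t | (⨅ n, X (u n).1 ω) ≤ X x.1 ω} :=
      isClosed_le continuous_const hg
    have hsub : Set.range u ⊆ {x : Set.Icc (0 : ℝ≥0) t | (⨅ n, X (u n).1 ω) ≤ X x.1 ω} := by
      rintro _ ⟨n, rfl⟩
      exact ciInf_le hbdd2 n
    have hcl := closure_minimal hsub hC
    have hmem : s ∈ closure (Set.range u) := by
      rw [(TopologicalSpace.denseRange_denseSeq (Set.Icc (0 : ℝ≥0) t)).closure_eq]
      trivial
    exact hcl hmem
  rw [key]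
  exact Measurable.iInf fun n => hmeas _


/-- Auxiliary σ-algebra used for the structure lemma of progressive enlargement. -/
def goodSets {Ω : Type*} (mF : MeasurableSpace Ω) (T : Set Ω) : MeasurableSpace Ω where
  MeasurableSet' A := ∃ B, MeasurableSet[mF] B ∧ A ∩ T = B ∩ T
  measurableSet_empty := ⟨∅, @MeasurableSet.empty _ mF, rfl⟩
  measurableSet_compl := by
    rintro A ⟨B, hB, hAB⟩
    refine ⟨Bᶜ, hB.compl, ?_⟩
    have hiff : ∀ ω ∈ T, (ω ∈ A ↔ ω ∈ B) := by
      intro ω hω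
      constructor
      · intro h; exact ((Set.ext_iff.mp hAB ω).mp ⟨h, hω⟩).1
      · intro h; exact ((Set.ext_iff.mp hAB ω).mpr ⟨h, hω⟩).1
    ext ω
    simp only [Set.mem_inter_iff, Set.mem_compl_iff]
    constructor
    · rintro ⟨h1, h2⟩; exact ⟨fun hB' => h1 ((hiff ω h2).mpr hB'), h2⟩
    · rintro ⟨h1, h2⟩; exact ⟨fun hA' => h1 ((hiff ω h2).mp hA'), h2⟩
  measurableSet_iUnion := by
    intro f hf
    choose B hB hfB using hf
    exact ⟨⋃ n, B n, MeasurableSet.iUnion hB, by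
      rw [Set.iUnion_inter, Set.iUnion_inter]
      exact Set.iUnion_congr hfB⟩

/-- Structure lemma: every set of the progressively enlarged σ-algebra coincides on the
survival event `{t < τ}` with a set of `F t`. -/
lemma exists_measurable_eq_on_survival {Ω : Type*} (mF : MeasurableSpace Ω) (τ : Ω → ℝ≥0)
    (t : ℝ≥0) {A : Set Ω} (hA : MeasurableSet[mF ⊔ defaultSigma τ t] A) :
    ∃ B, MeasurableSet[mF] B ∧ A ∩ {ω | t < τ ω} = B ∩ {ω | t < τ ω} := by
  have hle : mF ⊔ defaultSigma τ t ≤ goodSets mF {ω | t < τ ω} := by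
    refine sup_le (fun s hs => ⟨s, hs, rfl⟩) (MeasurableSpace.generateFrom_le ?_)
    rintro A ⟨s, hs, rfl⟩
    refine ⟨∅, @MeasurableSet.empty _ mF, ?_⟩
    ext ω
    simp only [Set.mem_inter_iff, Set.mem_setOf_eq, Set.mem_empty_iff_false, false_and,
      iff_false, not_and]
    intro h1 h2
    exact absurd (h1.trans hs) (not_le.mpr h2)
  exact hle A hA


/-- **Proposition 4.1, first formula.** For all `0 ≤ t ≤ θ` and every integrable
`F_θ`-measurable `φ_θ`, one has `P(τ > t, S_t = 0) = 0` and, `P`-a.s.,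
`E_P[φ_θ 1_{τ > θ} | G_t] = 1_{τ > t} E_P[φ_θ S_θ | F_t] / S_t` (the right-hand side being
`0` on `{τ ≤ t}`). -/
theorem progressive_information_key_lemma
    {Ω : Type*} [m0 : MeasurableSpace Ω] {P : Measure Ω} [IsProbabilityMeasure P]
    (F : Filtration ℝ≥0 m0)
    (X : ℝ≥0 → Ω → ℝ) (hX_adapted : Adapted F X)
    (hX_cont : ∀ ω, Continuous fun s => X s ω)
    (L : Ω → ℝ) (hL : Measurable L)
    (hX0 : ∀ᵐ ω ∂P, L ω < X 0 ω)
    (τ : Ω → ℝ≥0)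
    (hτ : ∀ (θ : ℝ≥0) (ω : Ω), θ < τ ω ↔ L ω < runInf X θ ω)
    (t θ : ℝ≥0) (htθ : t ≤ θ)
    (φ : Ω → ℝ) (hφ_meas : Measurable[F θ] φ) (hφ_int : Integrable φ P) :
    P {ω | t < τ ω ∧ azema P F τ t ω = 0} = 0 ∧
    (P[fun ω => φ ω * (if θ < τ ω then 1 else 0)|F t ⊔ defaultSigma τ t]) =ᵐ[P]
      fun ω => if t < τ ω then
        (P[fun ω' => φ ω' * azema P F τ θ ω'|F t]) ω / azema P F τ t ω
      else 0 := by
  have hm : F t ≤ m0 := F.le t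
  have hmθ : F θ ≤ m0 := F.le θ
  have hmeasX : ∀ s : ℝ≥0, Measurable (X s) :=
    fun s => (hX_adapted s).mono (F.le s) le_rfl
  have hTmeas : ∀ s : ℝ≥0, MeasurableSet {ω | s < τ ω} := by
    intro s
    have hset : {ω | s < τ ω} = {ω | L ω < runInf X s ω} := by
      ext ω; exact hτ s ω
    rw [hset]
    exact measurableSet_lt hL (measurable_runInf hmeasX hX_cont s)
  set T : Set Ω := {ω | t < τ ω} with hT_def
  set Tθ : Set Ω := {ω | θ < τ ω} with hTθ_def
  have hT : MeasurableSet T := hTmeas t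
  have hTθ : MeasurableSet Tθ := hTmeas θ
  have hTθT : Tθ ⊆ T := fun ω h => lt_of_le_of_lt htθ h
  -- indicators
  set indt : Ω → ℝ := fun ω => if t < τ ω then 1 else 0 with hindt_def
  set indθ : Ω → ℝ := fun ω => if θ < τ ω then 1 else 0 with hindθ_def
  have hindt_eq : indt = T.indicator (fun _ => (1 : ℝ)) := by
    funext ω; simp [hindt_def, Set.indicator_apply, hT_def, Set.mem_setOf_eq]
  have hindθ_eq : indθ = Tθ.indicator (fun _ => (1 : ℝ)) := by
    funext ω; simp [hindθ_def, Set.indicator_apply, hTθ_def, Set.mem_setOf_eq]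
  have hindt_int : Integrable indt P := by
    rw [hindt_eq]; exact (integrable_const (1 : ℝ)).indicator hT
  have hindθ_int : Integrable indθ P := by
    rw [hindθ_eq]; exact (integrable_const (1 : ℝ)).indicator hTθ
  -- Azema supermartingales
  set S : Ω → ℝ := azema P F τ t with hS_def
  set Sθ : Ω → ℝ := azema P F τ θ with hSθ_def
  have hS_condexp : S = P[indt|F t] := rfl
  have hSθ_condexp : Sθ = P[indθ|F θ] := rfl
  have hS_sm : StronglyMeasurable[F t] S := stronglyMeasurable_condExp
  have hS_meas : Measurable[F t] S := hS_sm.measurable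
  have hindt_nonneg : (0 : Ω → ℝ) ≤ᵐ[P] indt := by
    filter_upwards with ω
    by_cases h : t < τ ω <;> simp [hindt_def, h]
  have hindθ_nonneg : (0 : Ω → ℝ) ≤ᵐ[P] indθ := by
    filter_upwards with ω
    by_cases h : θ < τ ω <;> simp [hindθ_def, h]
  have hS_nonneg : (0 : Ω → ℝ) ≤ᵐ[P] S := condExp_nonneg hindt_nonneg
  have hSθ_nonneg : (0 : Ω → ℝ) ≤ᵐ[P] Sθ := condExp_nonneg hindθ_nonneg
  have hSθ_le_one : Sθ ≤ᵐ[P] fun _ => (1 : ℝ) := by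
    have h1 : Sθ ≤ᵐ[P] P[(fun _ => (1 : ℝ))|F θ] := by
      refine condExp_mono hindθ_int (integrable_const 1) ?_
      filter_upwards with ω
      by_cases h : θ < τ ω <;> simp [hindθ_def, h]
    refine h1.trans ?_
    rw [condExp_const hmθ]
  set Z : Set Ω := {ω | S ω = 0} with hZ_def
  have hZ_Ft : MeasurableSet[F t] Z := hS_meas (measurableSet_singleton (0 : ℝ))
  have hZ : MeasurableSet Z := hm _ hZ_Ft
  -- Part 1
  have part1 : P (T ∩ Z) = 0 := by
    have h1 : ∫ ω in Z, indt ω ∂P = ∫ ω in Z, S ω ∂P :=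
      (setIntegral_condExp hm hindt_int hZ_Ft).symm
    have h2 : ∫ ω in Z, S ω ∂P = 0 := by
      rw [setIntegral_congr_fun hZ (fun ω hω => hω)]
      simp
    have h3 : ∫ ω in Z, indt ω ∂P = (P (Z ∩ T)).toReal := by
      rw [hindt_eq, setIntegral_indicator hT, setIntegral_const]
      simp [measureReal_def]
    rw [h3, h2] at h1
    have h4 : P (Z ∩ T) = 0 := by
      rcases (ENNReal.toReal_eq_zero_iff _).mp h1 with h | h
      · exact h
      · exact absurd h (measure_ne_top _ _)
    rwa [Set.inter_comm] at h4
  -- integrability of φ * Sθ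
  have hφ_meas0 : Measurable φ := hφ_meas.mono hmθ le_rfl
  have hφSθ_int : Integrable (fun ω => φ ω * Sθ ω) P := by
    refine Integrable.mono hφ_int
      ((hφ_meas0.mul ((stronglyMeasurable_condExp.mono hmθ).measurable :
        Measurable Sθ)).stronglyMeasurable.aestronglyMeasurable) ?_
    filter_upwards [hSθ_nonneg, hSθ_le_one] with ω h0 h1
    rw [Real.norm_eq_abs, Real.norm_eq_abs, abs_mul]
    have : |Sθ ω| ≤ 1 := by rw [abs_of_nonneg h0]; exact h1
    calc |φ ω| * |Sθ ω| ≤ |φ ω| * 1 := by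
          exact mul_le_mul_of_nonneg_left this (abs_nonneg _)
      _ = |φ ω| := mul_one _
  set m1 : Ω → ℝ := P[fun ω => φ ω * Sθ ω|F t] with hm1_def
  have hm1_int : Integrable m1 P := integrable_condExp
  have hm1_sm : StronglyMeasurable[F t] m1 := stronglyMeasurable_condExp
  set h₀ : Ω → ℝ := fun ω => m1 ω / S ω with hh₀_def
  have hh₀_sm : StronglyMeasurable[F t] h₀ :=
    (hm1_sm.measurable.div hS_meas).stronglyMeasurable
  set Y : Ω → ℝ := fun ω => if t < τ ω then h₀ ω else 0 with hY_def
  have hY_eq : Y = T.indicator h₀ := by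
    funext ω; simp [hY_def, Set.indicator_apply, hT_def, Set.mem_setOf_eq]
  -- the progressive sigma algebra
  have hτs_meas : ∀ s : ℝ≥0, MeasurableSet {ω | τ ω ≤ s} := by
    intro s
    have hcompl : {ω | τ ω ≤ s} = {ω | s < τ ω}ᶜ := by
      ext ω; simp [not_lt]
    rw [hcompl]; exact (hTmeas s).compl
  have hGm0 : F t ⊔ defaultSigma τ t ≤ m0 := by
    refine sup_le hm (MeasurableSpace.generateFrom_le ?_)
    rintro A ⟨s, hs, rfl⟩
    exact hτs_meas s
  have hT_G : MeasurableSet[F t ⊔ defaultSigma τ t] T := by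
    have h1 : MeasurableSet[defaultSigma τ t] {ω | τ ω ≤ t} :=
      MeasurableSpace.measurableSet_generateFrom ⟨t, le_rfl, rfl⟩
    have h2 : MeasurableSet[defaultSigma τ t] T := by
      have hcompl : T = {ω | τ ω ≤ t}ᶜ := by
        ext ω; simp [hT_def, not_le]
      rw [hcompl]; exact h1.compl
    exact (le_sup_right : defaultSigma τ t ≤ F t ⊔ defaultSigma τ t) _ h2
  have hstruct : ∀ A : Set Ω, MeasurableSet[F t ⊔ defaultSigma τ t] A →
      ∃ B, MeasurableSet[F t] B ∧ A ∩ T = B ∩ T := by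
    intro A hA
    exact exists_measurable_eq_on_survival (F t) τ t hA
  -- withDensity measure
  set s₀ : Ω → ℝ≥0 := fun ω => (S ω).toNNReal with hs₀_def
  have hs₀_meas : Measurable s₀ := (hS_meas.mono hm le_rfl).real_toNNReal
  set ν : Measure Ω := P.withDensity (fun ω => (s₀ ω : ℝ≥0∞)) with hν_def
  have hS_int : Integrable S P := hS_condexp ▸ integrable_condExp
  have hs₀_le : ∀ ω, (s₀ ω : ℝ≥0∞) ≤ (‖S ω‖₊ : ℝ≥0∞) := by
    intro ω
    simp only [ENNReal.coe_le_coe]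
    refine Real.toNNReal_le_iff_le_coe.mpr ?_
    rw [coe_nnnorm, Real.norm_eq_abs]
    exact le_abs_self _
  have hS_lint_fin : ∫⁻ ω, (s₀ ω : ℝ≥0∞) ∂P < ∞ :=
    lt_of_le_of_lt (lintegral_mono hs₀_le) hS_int.hasFiniteIntegral
  -- the trimmed measures agree
  have hmeasure_eq : (P.restrict T).trim hm = ν.trim hm := by
    refine @Measure.ext Ω (F t) _ _ (fun A hA => ?_)
    rw [trim_measurableSet_eq hm hA, trim_measurableSet_eq hm hA,
      Measure.restrict_apply (hm A hA)]
    have hν : ν A = ∫⁻ ω in A, (s₀ ω : ℝ≥0∞) ∂P := withDensity_apply _ (hm A hA)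
    have h1 : ∫ ω in A, indt ω ∂P = ∫ ω in A, S ω ∂P :=
      (setIntegral_condExp hm hindt_int hA).symm
    have h2 : ∫ ω in A, indt ω ∂P = (P (A ∩ T)).toReal := by
      rw [hindt_eq, setIntegral_indicator hT, setIntegral_const]
      simp [measureReal_def]
    have h3 : ∫ ω in A, S ω ∂P = (∫⁻ ω in A, (s₀ ω : ℝ≥0∞) ∂P).toReal := by
      rw [integral_eq_lintegral_of_nonneg_ae (ae_restrict_of_ae hS_nonneg)
        ((hS_sm.mono hm).aestronglyMeasurable)]
      rfl
    have hfin1 : P (A ∩ T) ≠ ∞ := measure_ne_top _ _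
    have hfin2 : ∫⁻ ω in A, (s₀ ω : ℝ≥0∞) ∂P ≠ ∞ :=
      (lt_of_le_of_lt (setLIntegral_le_lintegral _ _) hS_lint_fin).ne
    have h4 : (P (A ∩ T)).toReal = (∫⁻ ω in A, (s₀ ω : ℝ≥0∞) ∂P).toReal := by
      rw [← h2, h1, h3]
    rw [hν]
    exact (ENNReal.toReal_eq_toReal_iff' hfin1 hfin2).mp h4
  -- key Bochner integral identity
  have hkey : ∀ g : Ω → ℝ, StronglyMeasurable[F t] g →
      ∫ ω, g ω ∂(P.restrict T) = ∫ ω, s₀ ω • g ω ∂P := by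
    intro g hg
    rw [integral_trim hm hg, hmeasure_eq, ← integral_trim hm hg]
    exact integral_withDensity_eq_integral_smul hs₀_meas g
  -- key lintegral identity
  have hkeyL : ∀ g : Ω → ℝ≥0∞, Measurable[F t] g →
      ∫⁻ ω, g ω ∂(P.restrict T) = ∫⁻ ω, (s₀ ω : ℝ≥0∞) * g ω ∂P := by
    intro g hg
    rw [← lintegral_trim hm hg, hmeasure_eq, lintegral_trim hm hg]
    exact lintegral_withDensity_eq_lintegral_mul P
      (hs₀_meas.coe_nnreal_ennreal) (hg.mono hm le_rfl)
  -- m1 vanishes a.e. where S vanishes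
  have hZθ : MeasurableSet[F θ] Z := (F.mono htθ) _ hZ_Ft
  have hSθZ_int : ∫ ω in Z, Sθ ω ∂P = 0 := by
    have h1 : ∫ ω in Z, Sθ ω ∂P = ∫ ω in Z, indθ ω ∂P := by
      rw [hSθ_condexp]
      exact setIntegral_condExp hmθ hindθ_int hZθ
    have h2 : ∫ ω in Z, indθ ω ∂P = (P (Z ∩ Tθ)).toReal := by
      rw [hindθ_eq, setIntegral_indicator hTθ, setIntegral_const]
      simp [measureReal_def]
    have h3 : P (Z ∩ Tθ) = 0 := by
      refine measure_mono_null ?_ part1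
      exact fun ω hω => ⟨hTθT hω.2, hω.1⟩
    rw [h1, h2, h3]
    simp
  have hSθZ : ∀ᵐ ω ∂P, ω ∈ Z → Sθ ω = 0 := by
    have hint : IntegrableOn Sθ Z P :=
      (hSθ_condexp ▸ (integrable_condExp : Integrable (P[indθ|F θ]) P)).integrableOn
    have h0 : Sθ =ᵐ[P.restrict Z] 0 :=
      (integral_eq_zero_iff_of_nonneg_ae (ae_restrict_of_ae hSθ_nonneg) hint).mp hSθZ_int
    exact (ae_restrict_iff' hZ).mp h0
  have hφSθZ : Z.indicator (fun ω => φ ω * Sθ ω) =ᵐ[P] 0 := by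
    filter_upwards [hSθZ] with ω h
    by_cases hω : ω ∈ Z
    · simp [Set.indicator_of_mem hω, h hω]
    · simp [Set.indicator_of_notMem hω]
  have hm1Z : ∀ᵐ ω ∂P, S ω = 0 → m1 ω = 0 := by
    have hc1 : Z.indicator m1 =ᵐ[P] P[Z.indicator (fun ω => φ ω * Sθ ω)|F t] :=
      (condExp_indicator hφSθ_int hZ_Ft).symm
    have hc2 : (P[Z.indicator (fun ω => φ ω * Sθ ω)|F t] : Ω → ℝ) =ᵐ[P]
        P[(0 : Ω → ℝ)|F t] := condExp_congr_ae hφSθZ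
    have hc3 : Z.indicator m1 =ᵐ[P] 0 := by
      refine (hc1.trans hc2).trans ?_
      rw [condExp_zero]
    filter_upwards [hc3] with ω h hS0
    have hωZ : ω ∈ Z := hS0
    rwa [Set.indicator_of_mem hωZ] at h
  -- integrability of Y
  have hY_int : Integrable Y P := by
    rw [hY_eq]
    constructor
    · exact ((hh₀_sm.mono hm).indicator hT).aestronglyMeasurable
    · have heq : (fun ω => (‖T.indicator h₀ ω‖₊ : ℝ≥0∞)) =
          T.indicator (fun ω => (‖h₀ ω‖₊ : ℝ≥0∞)) := by
        funext ω
        by_cases hω : ω ∈ T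
        · simp [Set.indicator_of_mem hω]
        · simp [Set.indicator_of_notMem hω]
      show ∫⁻ ω, (‖T.indicator h₀ ω‖₊ : ℝ≥0∞) ∂P < ∞
      rw [heq, lintegral_indicator hT, hkeyL (fun ω => (‖h₀ ω‖₊ : ℝ≥0∞)) (by exact measurable_coe_nnreal_ennreal.comp (measurable_nnnorm.comp hh₀_sm.measurable))]
      refine lt_of_le_of_lt (lintegral_mono fun ω => ?_) hm1_int.hasFiniteIntegral
      rcases le_or_gt (S ω) 0 with h | h
      · have : s₀ ω = 0 := by
          simp [hs₀_def, Real.toNNReal_of_nonpos h]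
        simp [this]
      · rw [enorm_eq_nnnorm, ← ENNReal.coe_mul, ENNReal.coe_le_coe, ← NNReal.coe_le_coe, NNReal.coe_mul,
          coe_nnnorm, coe_nnnorm, Real.norm_eq_abs, Real.norm_eq_abs]
        have hs₀ω : (s₀ ω : ℝ) = S ω := Real.coe_toNNReal _ h.le
        rw [hs₀ω]
        show S ω * |m1 ω / S ω| ≤ |m1 ω|
        rw [abs_div, abs_of_pos h, mul_comm, div_mul_cancel₀ _ (ne_of_gt h)]
  -- integrability of φ * indθ
  have hφindθ_int : Integrable (fun ω => φ ω * indθ ω) P := by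
    refine Integrable.mono hφ_int
      ((hφ_meas0.mul (hindθ_eq ▸ (measurable_const.indicator hTθ :
        Measurable (Tθ.indicator fun _ => (1:ℝ))))).stronglyMeasurable.aestronglyMeasurable) ?_
    filter_upwards with ω
    rw [Real.norm_eq_abs, Real.norm_eq_abs, abs_mul]
    have : |indθ ω| ≤ 1 := by
      by_cases h : θ < τ ω <;> simp [hindθ_def, h]
    calc |φ ω| * |indθ ω| ≤ |φ ω| * 1 :=
          mul_le_mul_of_nonneg_left this (abs_nonneg _)
      _ = |φ ω| := mul_one _
  -- the set-integral identity
  have hsetint : ∀ A : Set Ω, MeasurableSet[F t ⊔ defaultSigma τ t] A → P A < ∞ →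
      ∫ ω in A, Y ω ∂P = ∫ ω in A, φ ω * indθ ω ∂P := by
    intro A hA _
    obtain ⟨B, hB, hAB⟩ := hstruct A hA
    have hsmul : (fun ω => s₀ ω • B.indicator h₀ ω) =ᵐ[P] B.indicator m1 := by
      filter_upwards [hS_nonneg, hm1Z] with ω h1 h2
      by_cases hω : ω ∈ B
      · rw [Set.indicator_of_mem hω, Set.indicator_of_mem hω]
        rcases eq_or_lt_of_le h1 with h | h
        · have hS0 : S ω = 0 := h.symm
          simp [hs₀_def, hh₀_def, hS0, h2 hS0]
        · have hs₀ω : (s₀ ω : ℝ) = S ω := Real.coe_toNNReal _ h1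
          rw [NNReal.smul_def, smul_eq_mul, hs₀ω]
          show S ω * (m1 ω / S ω) = m1 ω
          rw [mul_comm, div_mul_cancel₀ _ (ne_of_gt h)]
      · simp [Set.indicator_of_notMem hω]
    have hLHS : ∫ ω in A, Y ω ∂P = ∫ ω in B, m1 ω ∂P := by
      have e1 : A.indicator Y = T.indicator (B.indicator h₀) := by
        rw [hY_eq, Set.indicator_indicator, hAB, Set.inter_comm, ← Set.indicator_indicator]
      calc ∫ ω in A, Y ω ∂P = ∫ ω, A.indicator Y ω ∂P :=
            (integral_indicator (hGm0 A hA)).symm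
        _ = ∫ ω, T.indicator (B.indicator h₀) ω ∂P := by rw [e1]
        _ = ∫ ω, B.indicator h₀ ω ∂(P.restrict T) := integral_indicator hT
        _ = ∫ ω, s₀ ω • B.indicator h₀ ω ∂P := hkey _ (hh₀_sm.indicator hB)
        _ = ∫ ω, B.indicator m1 ω ∂P := integral_congr_ae hsmul
        _ = ∫ ω in B, m1 ω ∂P := integral_indicator (hm B hB)
    have hRHS : ∫ ω in A, φ ω * indθ ω ∂P = ∫ ω in B, m1 ω ∂P := by
      have e2 : A.indicator (fun ω => φ ω * indθ ω) =
          B.indicator (fun ω => φ ω * indθ ω) := by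
        funext ω
        by_cases hθω : θ < τ ω
        · have hωT : ω ∈ T := lt_of_le_of_lt htθ hθω
          have hiff : ω ∈ A ↔ ω ∈ B := by
            constructor
            · intro h; exact ((Set.ext_iff.mp hAB ω).mp ⟨h, hωT⟩).1
            · intro h; exact ((Set.ext_iff.mp hAB ω).mpr ⟨h, hωT⟩).1
          simp only [Set.indicator_apply]
          exact if_congr hiff rfl rfl
        · have hz : φ ω * indθ ω = 0 := by simp [hindθ_def, hθω]
          simp only [Set.indicator_apply, hz, ite_self]
      have hcond : (P[fun ω => φ ω * indθ ω|F θ] : Ω → ℝ) =ᵐ[P]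
          fun ω => φ ω * Sθ ω := by
        have := condExp_mul_of_stronglyMeasurable_left hφ_meas.stronglyMeasurable
          (show Integrable (φ * indθ) P from hφindθ_int) hindθ_int
        exact this
      calc ∫ ω in A, φ ω * indθ ω ∂P
          = ∫ ω, A.indicator (fun ω => φ ω * indθ ω) ω ∂P :=
            (integral_indicator (hGm0 A hA)).symm
        _ = ∫ ω, B.indicator (fun ω => φ ω * indθ ω) ω ∂P := by rw [e2]
        _ = ∫ ω in B, φ ω * indθ ω ∂P := integral_indicator (hm B hB)
        _ = ∫ ω in B, (P[fun ω => φ ω * indθ ω|F θ]) ω ∂P :=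
            (setIntegral_condExp hmθ hφindθ_int ((F.mono htθ) _ hB)).symm
        _ = ∫ ω in B, φ ω * Sθ ω ∂P := integral_congr_ae (ae_restrict_of_ae hcond)
        _ = ∫ ω in B, m1 ω ∂P := (setIntegral_condExp hm hφSθ_int hB).symm
    rw [hLHS, hRHS]
  -- conclude
  have hY_smG : StronglyMeasurable[F t ⊔ defaultSigma τ t] Y := by
    rw [hY_eq]
    exact (hh₀_sm.mono le_sup_left).indicator hT_G
  have hmain : Y =ᵐ[P] P[fun ω => φ ω * indθ ω|F t ⊔ defaultSigma τ t] :=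
    ae_eq_condExp_of_forall_setIntegral_eq hGm0 hφindθ_int
      (fun s _ _ => hY_int.integrableOn) hsetint hY_smG.aestronglyMeasurable
  exact ⟨part1, hmain.symm⟩
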